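/- Let A and B be r×r matrices and define the 2r×2r block upper-triangular matrix C = [[A, B],[0, A]]. Then for any t ≥ 0, exp(Ct) = [[exp(At), ∫₀ᵗ exp(A(t−s))·B·exp(As) ds],[0, exp(At)]]; in particular the upper-right r×r block of exp(Ct) equals ∫₀ᵗ exp(A(t−s)) B exp(As) ds. -/

import Mathlib

open Matrix intervalIntegral

attribute [local instance] Matrix.linftyOpNormedRing Matrix.linftyOpNormedAlgebra

section VanLoanAux
open NormedSpace
variable {r : ℕ}

noncomputable def fbL (r : ℕ) : (Matrix (Fin r) (Fin r) ℝ × Matrix (Fin r) (Fin r) ℝ) →L[ℝ]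
    Matrix (Fin r ⊕ Fin r) (Fin r ⊕ Fin r) ℝ :=
  LinearMap.toContinuousLinearMap
  { toFun := fun p => Matrix.fromBlocks p.1 p.2 0 p.1
    map_add' := by intro p q; simp [Matrix.fromBlocks_add]
    map_smul' := by intro c p; simp [Matrix.fromBlocks_smul] }

section
variable (A B : Matrix (Fin r) (Fin r) ℝ)

noncomputable def gg (t : ℝ) : Matrix (Fin r) (Fin r) ℝ :=
  ∫ s in (0:ℝ)..t, exp ((-s) • A) * B * exp (s • A)

lemma cont_f : Continuous fun s : ℝ => exp ((-s) • A) * B * exp (s • A) := by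
  have h1 : Continuous fun s : ℝ => exp ((-s) • A) :=
    (exp_continuous).comp (by fun_prop)
  have h2 : Continuous fun s : ℝ => exp (s • A) :=
    (exp_continuous).comp (by fun_prop)
  exact (h1.mul continuous_const).mul h2

lemma gg_deriv (t : ℝ) :
    HasDerivAt (gg A B) (exp ((-t) • A) * B * exp (t • A)) t := by
  exact intervalIntegral.integral_hasDerivAt_right
    ((cont_f A B).intervalIntegrable 0 t)
    (by
      haveI : TopologicalSpace.PseudoMetrizableSpace (Matrix (Fin r) (Fin r) ℝ) :=
        inferInstanceAs (TopologicalSpace.PseudoMetrizableSpace (Fin r → Fin r → ℝ))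
      exact (cont_f A B).stronglyMeasurableAtFilter _ _)
    (cont_f A B).continuousAt

noncomputable def Φ (t : ℝ) : Matrix (Fin r ⊕ Fin r) (Fin r ⊕ Fin r) ℝ :=
  fromBlocks (exp (t • A)) (exp (t • A) * gg A B t) 0 (exp (t • A))

lemma exp_neg_mul' {n : Type*} [Fintype n] [DecidableEq n] (A : Matrix n n ℝ) (t : ℝ) :
    exp (t • A) * exp ((-t) • A) = 1 := by
  rw [← Matrix.exp_add_of_commute _ _ (((Commute.refl A).smul_left t).smul_right (-t))]
  simp [← add_smul]

lemma Φ_deriv (t : ℝ) :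
    HasDerivAt (Φ A B) (fromBlocks A B 0 A * Φ A B t) t := by
  have hX : HasDerivAt (fun u : ℝ => exp (u • A)) (A * exp (t • A)) t :=
    hasDerivAt_exp_smul_const' A t
  have hY : HasDerivAt (fun u : ℝ => exp (u • A) * gg A B u)
      (A * exp (t • A) * gg A B t + exp (t • A) * (exp ((-t) • A) * B * exp (t • A))) t :=
    hX.mul (gg_deriv A B t)
  have key : HasDerivAt (fun u => (fbL r) (exp (u • A), exp (u • A) * gg A B u))
      ((fbL r) (A * exp (t • A),
        A * exp (t • A) * gg A B t + exp (t • A) * (exp ((-t) • A) * B * exp (t • A)))) t :=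
    ((fbL r).hasFDerivAt.comp_hasDerivAt t (hX.prodMk hY))
  have hΦ : (fun u => (fbL r) (exp (u • A), exp (u • A) * gg A B u)) = Φ A B := rfl
  rw [hΦ] at key
  convert key using 1
  have h1 : exp (t • A) * (exp ((-t) • A) * B * exp (t • A)) = B * exp (t • A) := by
    rw [← mul_assoc, ← mul_assoc, exp_neg_mul' A t, one_mul]
  simp only [fbL, LinearMap.coe_toContinuousLinearMap', LinearMap.coe_mk, AddHom.coe_mk]
  rw [Φ, fromBlocks_multiply, h1, mul_assoc]
  simp
end

section
variable (A B : Matrix (Fin r) (Fin r) ℝ)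

lemma Φ_eq (t : ℝ) : Φ A B t = exp (t • fromBlocks A B 0 A) := by
  set C := fromBlocks A B 0 A with hC
  have hΨ : ∀ s : ℝ, HasDerivAt (fun u => exp (u • (-C)) * Φ A B u) 0 s := by
    intro s
    have hE : HasDerivAt (fun u : ℝ => exp (u • (-C))) ((-C) * exp (s • (-C))) s :=
      hasDerivAt_exp_smul_const' (-C) s
    have h := hE.mul (Φ_deriv A B s)
    have hc : Commute C (exp (s • (-C))) :=
      (((Commute.refl C).neg_right).smul_right s).exp_right
    convert h using 1
    pick_goal 5
    rw [← mul_assoc, ← hc.eq, neg_mul, neg_mul, neg_add_cancel]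
    all_goals rfl
  have hconst : exp (t • (-C)) * Φ A B t = exp ((0:ℝ) • (-C)) * Φ A B 0 :=
    is_const_of_deriv_eq_zero (fun s => (hΨ s).differentiableAt)
      (fun s => (hΨ s).deriv) t 0
  have hΦ0 : Φ A B 0 = 1 := by
    simp [Φ, gg, Matrix.fromBlocks_one]
  rw [hΦ0, zero_smul, exp_zero, one_mul] at hconst
  
  have hinv : exp (t • C) * exp (t • (-C)) = 1 := by
    rw [smul_neg, ← neg_smul]
    exact exp_neg_mul' C t
  calc Φ A B t = 1 * Φ A B t := (one_mul _).symm
    _ = exp (t • C) * exp (t • (-C)) * Φ A B t := by rw [hinv]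
    _ = exp (t • C) * (exp (t • (-C)) * Φ A B t) := mul_assoc _ _ _
    _ = exp (t • C) := by rw [hconst, mul_one]

lemma integral_eq (t : ℝ) :
    (∫ s in (0:ℝ)..t, exp ((t - s) • A) * B * exp (s • A))
      = exp (t • A) * gg A B t := by
  have hts : ∀ s : ℝ, exp ((t - s) • A) = exp (t • A) * exp ((-s) • A) := by
    intro s
    rw [← Matrix.exp_add_of_commute _ _ (((Commute.refl A).smul_left t).smul_right (-s)), ← add_smul,
      ← sub_eq_add_neg]
  have key := (ContinuousLinearMap.mul ℝ _ (exp (t • A))).intervalIntegral_comp_comm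
    ((cont_f A B).intervalIntegrable 0 t : IntervalIntegrable _ MeasureTheory.volume 0 t)
  simp only [ContinuousLinearMap.mul_apply'] at key
  rw [gg, ← key]
  congr 1 with s
  rw [hts, mul_assoc, mul_assoc, mul_assoc]

end
end VanLoanAux

/-- **Van Loan's identity.** Let `A` and `B` be `r×r` matrices and let
`C = [[A, B], [0, A]]` be the `2r×2r` block upper-triangular matrix.  Then for any
`t ≥ 0`, `exp(Ct) = [[exp(At), ∫₀ᵗ exp(A(t−s))·B·exp(As) ds], [0, exp(At)]]`; in
particular the upper-right `r×r` block of `exp(Ct)` equals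
`∫₀ᵗ exp(A(t−s)) B exp(As) ds`. -/
theorem van_loan_block_exponential
    {r : ℕ} (A B : Matrix (Fin r) (Fin r) ℝ) (t : ℝ) (ht : 0 ≤ t) :
    NormedSpace.exp (t • Matrix.fromBlocks A B 0 A) =
      Matrix.fromBlocks (NormedSpace.exp (t • A))
        (∫ s in (0:ℝ)..t,
          NormedSpace.exp ((t - s) • A) * B * NormedSpace.exp (s • A))
        0 (NormedSpace.exp (t • A)) ∧
    (NormedSpace.exp (t • Matrix.fromBlocks A B 0 A)).toBlocks₁₂ =
      ∫ s in (0:ℝ)..t,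
        NormedSpace.exp ((t - s) • A) * B * NormedSpace.exp (s • A) := by
  have h1 : NormedSpace.exp (t • Matrix.fromBlocks A B 0 A) =
      Matrix.fromBlocks (NormedSpace.exp (t • A))
        (∫ s in (0:ℝ)..t,
          NormedSpace.exp ((t - s) • A) * B * NormedSpace.exp (s • A))
        0 (NormedSpace.exp (t • A)) := by
    rw [integral_eq A B t, ← Φ_eq A B t]; rfl
  exact ⟨h1, by rw [h1, Matrix.toBlocks_fromBlocks₁₂]⟩
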